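/- The number of plane (rooted ordered) trees with n nodes having child sequence c (i.e., some ordering v_1,...,v_n of the nodes has v_i with exactly c_i children) equals (1/n) · n! / ∏_{k≥0} n_k!, where n_k = #{i : c_i = k}. -/

import Mathlib

/-- A plane (rooted ordered) tree: a root together with an ordered list of subtrees. -/
inductive PlaneTree where
  | node : List PlaneTree → PlaneTree

namespace PlaneTree

/-- Number of nodes. -/
def size : PlaneTree → ℕ
  | node l => 1 + (l.attach.map fun t => size t.1).sum
decreasing_by simp only [PlaneTree.node.sizeOf_spec]; have := List.sizeOf_lt_of_mem t.2; omega

/-- The multiset of the numbers of children of the nodes of a plane tree. -/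
def childCounts : PlaneTree → Multiset ℕ
  | node l => l.length ::ₘ (l.attach.map fun t => childCounts t.1).sum
decreasing_by simp only [PlaneTree.node.sizeOf_spec]; have := List.sizeOf_lt_of_mem t.2; omega

/-- Number of nodes at depth `k`. -/
def nodesAt : ℕ → PlaneTree → ℕ
  | 0, _ => 1
  | k + 1, node l => (l.map (nodesAt k)).sum

/-- Width: maximum number of nodes at any single depth. -/
noncomputable def width (T : PlaneTree) : ℕ := sSup (Set.range fun k => nodesAt k T)

/-- Height: greatest depth of any node. -/
noncomputable def height (T : PlaneTree) : ℕ := sSup {k | nodesAt k T ≠ 0}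

/-- `T` has child sequence `c` iff the multiset of child-counts of its nodes is
the multiset of entries of `c`. -/
def hasChildSeq {n : ℕ} (c : Fin n → ℕ) (T : PlaneTree) : Prop :=
  childCounts T = Multiset.map c Finset.univ.val

end PlaneTree


/-- `u` is a concatenation shape of `k` tree codes: sum + k = length, and every proper
prefix `take i` satisfies `i < sum + k`. -/
def Blocks (k : ℕ) (u : List ℕ) : Prop :=
  u.sum + k = u.length ∧ ∀ i < u.length, i + 1 ≤ (u.take i).sum + k

def IsCode (w : List ℕ) : Prop := Blocks 1 w

theorem blocks_nil : Blocks 0 [] := ⟨rfl, by simp⟩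

theorem blocks_zero_iff (u : List ℕ) : Blocks 0 u → u = [] := by
  rintro ⟨h1, h2⟩
  cases u with
  | nil => rfl
  | cons a t => exact absurd (h2 0 (by simp)) (by simp)

theorem blocks_pos {k : ℕ} {u : List ℕ} (h : Blocks k u) (hu : u ≠ []) : 0 < k := by
  rcases Nat.eq_zero_or_pos k with rfl | h'
  · exact absurd (blocks_zero_iff u h) hu
  · exact h'

theorem isCode_ne_nil {v : List ℕ} (h : IsCode v) : v ≠ [] := by
  rintro rfl; simpa using h.1

theorem blocks_append {k : ℕ} {v t : List ℕ} (hv : IsCode v) (ht : Blocks k t) :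
    Blocks (k + 1) (v ++ t) := by
  obtain ⟨hv1, hv2⟩ := hv
  obtain ⟨ht1, ht2⟩ := ht
  constructor
  · simp only [List.sum_append, List.length_append]; omega
  · intro i hi
    simp only [List.length_append] at hi
    rcases lt_trichotomy i v.length with h | h | h
    · rw [List.take_append_of_le_length (le_of_lt h)]
      have := hv2 i h
      omega
    · subst h
      rw [List.take_left]
      have hk : 0 < k := blocks_pos ⟨ht1, ht2⟩ (by rintro rfl; simp at hi)
      omega
    · have h2 : i - v.length < t.length := by omega
      rw [List.take_append, List.take_of_length_le (by omega), List.sum_append]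
      have := ht2 (i - v.length) h2
      omega

theorem blocks_flatten : ∀ (ws : List (List ℕ)), (∀ w ∈ ws, IsCode w) →
    Blocks ws.length ws.flatten
  | [], _ => blocks_nil
  | v :: ws, h => by
    simp only [List.flatten_cons, List.length_cons]
    have : Blocks ws.length ws.flatten := blocks_flatten ws (fun w hw => h w (List.mem_cons_of_mem _ hw))
    exact blocks_append (h v (List.mem_cons_self)) this

theorem isCode_cons {k : ℕ} {u : List ℕ} (h : Blocks k u) : IsCode (k :: u) := by
  obtain ⟨h1, h2⟩ := h
  constructor
  · simp; omega
  · intro i hi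
    cases i with
    | zero => simp
    | succ j =>
      simp only [List.length_cons] at hi
      have hj : j < u.length := by omega
      have := h2 j hj
      simp only [List.take_succ_cons, List.sum_cons]
      omega

/-- splitting off the first code from a blocks list -/
theorem blocks_split {k : ℕ} {u : List ℕ} (h : Blocks (k + 1) u) :
    ∃ v t : List ℕ, IsCode v ∧ Blocks k t ∧ u = v ++ t ∧ v ≠ [] := by
  obtain ⟨h1, h2⟩ := h
  have hP : ∃ m, (u.take m).sum + 1 ≤ m ∧ m ≤ u.length := by
    refine ⟨u.length, ?_, le_rfl⟩
    rw [List.take_length]; omega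
  classical
  obtain ⟨m, ⟨hm1, hm2⟩, hmin'⟩ :
      ∃ m, ((u.take m).sum + 1 ≤ m ∧ m ≤ u.length) ∧
        ∀ i < m, ¬((u.take i).sum + 1 ≤ i ∧ i ≤ u.length) :=
    ⟨Nat.find hP, Nat.find_spec hP, fun i hi => Nat.find_min hP hi⟩
  have hmin : ∀ i < m, (u.take i).sum + 1 > i := by
    intro i hi
    have := hmin' i hi
    push_neg at this
    by_cases h' : i ≤ u.length
    · by_contra hcon; push_neg at hcon; have := this (by omega); omega
    · rw [List.take_of_length_le (by omega)]; omega
  have hm0 : 0 < m := by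
    by_contra h'
    push_neg at h'
    interval_cases m
    simp at hm1
  -- equality at m
  have hmono : (u.take (m - 1)).sum ≤ (u.take m).sum := by
    have h3 := List.sum_take_succ u (m - 1) (by omega)
    have h4 : m - 1 + 1 = m := by omega
    rw [h4] at h3
    omega
  have heq : (u.take m).sum + 1 = m := by
    have := hmin (m - 1) (by omega)
    omega
  refine ⟨u.take m, u.drop m, ⟨?_, ?_⟩, ⟨?_, ?_⟩, (List.take_append_drop m u).symm, ?_⟩
  · rw [List.length_take]; omega
  · intro i hi
    rw [List.length_take] at hi
    rw [List.take_take, min_eq_left (by omega)]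
    have := hmin i (by omega)
    omega
  · have hlen : (u.drop m).length = u.length - m := by simp
    have hsum : (u.take m).sum + (u.drop m).sum = u.sum := by
      rw [← List.sum_append, List.take_append_drop]
    omega
  · intro i hi
    rw [List.length_drop] at hi
    have key := h2 (m + i) (by omega)
    have : u.take (m + i) = u.take m ++ (u.drop m).take i := by
      rw [List.take_add]
    rw [this, List.sum_append] at key
    omega
  · intro h'
    have := congrArg List.length h'
    rw [List.length_take, List.length_nil] at this
    omega

namespace PlaneTree

theorem ind_aux (P : PlaneTree → Prop) (h : ∀ l : List PlaneTree, (∀ t ∈ l, P t) → P (node l)) :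
    ∀ T, P T
  | node l => h l (fun t ht => ind_aux P h t)
decreasing_by simp only [PlaneTree.node.sizeOf_spec]; have := List.sizeOf_lt_of_mem ht; omega

def code : PlaneTree → List ℕ
  | node l => l.length :: (l.attach.map fun t => code t.1).flatten
decreasing_by simp only [PlaneTree.node.sizeOf_spec]; have := List.sizeOf_lt_of_mem t.2; omega

theorem code_node (l : List PlaneTree) : code (node l) = l.length :: (l.map code).flatten := by
  rw [code]; simp

theorem childCounts_node (l : List PlaneTree) :
    childCounts (node l) = l.length ::ₘ (l.map childCounts).sum := by
  rw [childCounts]; simp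

theorem coe_code (T : PlaneTree) : (↑(code T) : Multiset ℕ) = childCounts T := by
  induction T using ind_aux with
  | _ l ih =>
    rw [code_node, childCounts_node]
    have : ((l.map code).flatten : Multiset ℕ) = (l.map childCounts).sum := by
      induction l with
      | nil => simp
      | cons a r ihr =>
        simp only [List.map_cons, List.flatten_cons, List.sum_cons, ← Multiset.coe_add,
          ← ihr (fun t ht => ih t (List.mem_cons_of_mem _ ht)), ih a (List.mem_cons_self)]
    simp only [← Multiset.cons_coe, this]

theorem isCode_code (T : PlaneTree) : IsCode (code T) := by
  induction T using ind_aux with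
  | _ l ih =>
    rw [code_node]
    have h := blocks_flatten (l.map code) (by
      intro w hw; obtain ⟨t, ht, rfl⟩ := List.mem_map.mp hw; exact ih t ht)
    rw [List.length_map] at h
    exact isCode_cons h


/-- every blocks list decodes into a list of trees -/
theorem blocks_decode : ∀ N : ℕ, ∀ k u, u.length ≤ N → Blocks k u →
    ∃ ts : List PlaneTree, ts.length = k ∧ (ts.map code).flatten = u := by
  intro N
  induction N using Nat.strong_induction_on with
  | _ N IH =>
    intro k u hlen hb
    cases k with
    | zero =>
      obtain rfl := blocks_zero_iff u hb
      exact ⟨[], rfl, rfl⟩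
    | succ k =>
      obtain ⟨v, t, hv, ht, rfl, hvne⟩ := blocks_split hb
      have hN : 0 < N := by
        rcases v with _ | ⟨a, v'⟩
        · exact absurd rfl hvne
        · simp only [List.length_append, List.length_cons] at hlen; omega
      -- decode v into a tree
      obtain ⟨a, u₀, rfl⟩ : ∃ a u₀, v = a :: u₀ := by
        rcases v with _ | ⟨a, v'⟩
        · exact absurd rfl hvne
        · exact ⟨a, v', rfl⟩
      have hu₀ : Blocks a u₀ := by
        obtain ⟨h1, h2⟩ := hv
        simp only [List.sum_cons, List.length_cons] at h1
        constructor
        · omega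
        · intro i hi
          have := h2 (i + 1) (by simp; omega)
          simp only [List.take_succ_cons, List.sum_cons] at this
          omega
      have hu₀len : u₀.length ≤ N - 1 := by
        simp only [List.length_append, List.length_cons] at hlen; omega
      obtain ⟨ts₀, hts₀len, hts₀⟩ := IH (N - 1) (by omega) a u₀ hu₀len hu₀
      have htlen : t.length ≤ N - 1 := by
        simp only [List.length_append, List.length_cons] at hlen; omega
      obtain ⟨ts, htslen, hts⟩ := IH (N - 1) (by omega) k t htlen ht
      refine ⟨node ts₀ :: ts, by simp [htslen], ?_⟩
      simp [code_node, hts₀len, hts₀, hts]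

theorem decode (w : List ℕ) (hw : IsCode w) : ∃ T : PlaneTree, code T = w := by
  obtain ⟨a, u, rfl⟩ : ∃ a u, w = a :: u := by
    rcases w with _ | ⟨a, u⟩
    · exact absurd rfl (isCode_ne_nil hw)
    · exact ⟨a, u, rfl⟩
  have hu : Blocks a u := by
    obtain ⟨h1, h2⟩ := hw
    simp only [List.sum_cons, List.length_cons] at h1
    refine ⟨by omega, fun i hi => ?_⟩
    have := h2 (i + 1) (by simp; omega)
    simp only [List.take_succ_cons, List.sum_cons] at this
    omega
  obtain ⟨ts, hlen, hts⟩ := blocks_decode u.length a u le_rfl hu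
  exact ⟨node ts, by rw [code_node, hlen, hts]⟩

/-- two codes that are prefixes of a common list are equal -/
theorem code_prefix_eq {v v' : List ℕ} (hv : IsCode v) (hv' : IsCode v')
    (h : v <+: v' ∨ v' <+: v) : v = v' := by
  have key : ∀ a b : List ℕ, IsCode a → IsCode b → a <+: b → a = b := by
    intro a b ha hb hab
    by_contra hne
    obtain ⟨s, rfl⟩ := hab
    have hs : s ≠ [] := by rintro rfl; simp at hne
    have hlt : a.length < (a ++ s).length := by
      have := List.length_pos_iff.mpr hs
      simp only [List.length_append]
      omega
    have h2 := hb.2 a.length hlt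
    rw [List.take_left] at h2
    have := ha.1
    omega
  rcases h with h | h
  · exact key _ _ hv hv' h
  · exact (key _ _ hv' hv h).symm

theorem flatten_inj : ∀ ws ws' : List (List ℕ), (∀ w ∈ ws, IsCode w) → (∀ w ∈ ws', IsCode w) →
    ws.length = ws'.length → ws.flatten = ws'.flatten → ws = ws'
  | [], [], _, _, _, _ => rfl
  | v :: r, v' :: r', h, h', hlen, hj => by
    simp only [List.flatten_cons] at hj
    have hvv : v = v' := by
      apply code_prefix_eq (h v (by simp)) (h' v' (by simp))
      exact List.prefix_or_prefix_of_prefix (List.prefix_append v r.flatten)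
        (hj ▸ List.prefix_append v' r'.flatten)
    subst hvv
    have : r.flatten = r'.flatten := by
      have := List.append_cancel_left hj
      exact this
    have := flatten_inj r r' (fun w hw => h w (by simp [hw])) (fun w hw => h' w (by simp [hw]))
      (by simpa using hlen) this
    rw [this]

theorem map_code_inj_aux : ∀ (l l' : List PlaneTree), (∀ t ∈ l, ∀ t', code t = code t' → t = t') →
    l.map code = l'.map code → l = l'
  | [], [], _, _ => rfl
  | t :: r, t' :: r', h, e => by
    simp only [List.map_cons, List.cons.injEq] at e
    rw [h t (by simp) t' e.1, map_code_inj_aux r r' (fun x hx => h x (by simp [hx])) e.2]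
  | [], _ :: _, _, e => by simp at e
  | _ :: _, [], _, e => by simp at e

theorem code_inj : ∀ T T' : PlaneTree, code T = code T' → T = T' := by
  intro T
  induction T using ind_aux with
  | _ l ih =>
    intro T' h
    obtain ⟨l'⟩ := T'
    rw [code_node, code_node] at h
    simp only [List.cons.injEq] at h
    obtain ⟨hlen, hj⟩ := h
    have hmap : l.map code = l'.map code :=
      flatten_inj _ _ (by intro w hw; obtain ⟨t, ht, rfl⟩ := List.mem_map.mp hw; exact isCode_code t)
        (by intro w hw; obtain ⟨t, ht, rfl⟩ := List.mem_map.mp hw; exact isCode_code t)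
        (by simp [hlen]) hj
    rw [map_code_inj_aux l l' (fun t ht t' => ih t ht t') hmap]

end PlaneTree

theorem sum_take_mono (w : List ℕ) {i j : ℕ} (h : i ≤ j) :
    (w.take i).sum ≤ (w.take j).sum := by
  have : w.take j = w.take i ++ (w.drop i).take (j - i) := by
    rw [← List.take_add, Nat.add_sub_cancel' h]
  rw [this, List.sum_append]
  omega

theorem rot_take_low (w : List ℕ) {m i : ℕ} (hm : m ≤ w.length) (hi : i ≤ w.length - m) :
    (w.take m).sum + ((w.rotate m).take i).sum = (w.take (m + i)).sum := by
  rw [List.rotate_eq_drop_append_take hm,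
    List.take_append_of_le_length (by rw [List.length_drop]; omega),
    List.take_add, List.sum_append]

theorem rot_take_high (w : List ℕ) {m i : ℕ} (hm : m ≤ w.length) (hi1 : w.length - m ≤ i)
    (hi2 : i ≤ w.length) :
    (w.take m).sum + ((w.rotate m).take i).sum
      = w.sum + (w.take (i - (w.length - m))).sum := by
  rw [List.rotate_eq_drop_append_take hm, List.take_append, List.sum_append]
  have e1 : (w.drop m).take i = w.drop m :=
    List.take_of_length_le (by rw [List.length_drop]; omega)
  have e2 : (w.take m).take (i - (w.drop m).length) = w.take (i - (w.length - m)) := by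
    rw [List.length_drop, List.take_take, min_eq_left (by omega)]
  rw [e1, e2]
  have : (w.take m).sum + (w.drop m).sum = w.sum := by
    rw [← List.sum_append, List.take_append_drop]
  omega

theorem exists_rotate_isCode (w : List ℕ) (hw : w.sum + 1 = w.length) :
    ∃ m < w.length, IsCode (w.rotate m) := by
  set n := w.length with hn
  have hn0 : 0 < n := by omega
  have hSn : (w.take n).sum = n - 1 := by rw [hn, List.take_length]; omega
  have hSle : ∀ i, (w.take i).sum ≤ n - 1 := by
    intro i
    rcases le_or_gt i n with h | h
    · have := sum_take_mono w h; omega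
    · rw [List.take_of_length_le (by omega)]; omega
  -- first argmax of key i := i + (n - 1 - S i) over i < n
  obtain ⟨b, hb, hbmax⟩ := Finset.exists_max_image (Finset.range n)
    (fun i => i + (n - 1 - (w.take i).sum)) ⟨0, Finset.mem_range.mpr hn0⟩
  rw [Finset.mem_range] at hb
  have hPb : b < n ∧ ∀ j < n, j + (n - 1 - (w.take j).sum) ≤ b + (n - 1 - (w.take b).sum) :=
    ⟨hb, fun j hj => hbmax j (Finset.mem_range.mpr hj)⟩
  classical
  have hEx : ∃ m, m < n ∧ ∀ j < n, j + (n - 1 - (w.take j).sum) ≤ m + (n - 1 - (w.take m).sum) :=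
    ⟨b, hPb⟩
  obtain ⟨m, ⟨hmn, hmax⟩, hmin⟩ :
      ∃ m, (m < n ∧ ∀ j < n, j + (n - 1 - (w.take j).sum) ≤ m + (n - 1 - (w.take m).sum)) ∧
        ∀ i < m, ¬(i < n ∧ ∀ j < n, j + (n - 1 - (w.take j).sum) ≤ i + (n - 1 - (w.take i).sum)) :=
    ⟨Nat.find hEx, Nat.find_spec hEx, fun i hi => Nat.find_min hEx hi⟩
  have hfirst : ∀ i < m, i + (n - 1 - (w.take i).sum) < m + (n - 1 - (w.take m).sum) := by
    intro i hi
    have h1 := hmin i hi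
    push_neg at h1
    obtain ⟨j, hjn, hj⟩ := h1 (by omega)
    have := hmax j hjn
    omega
  refine ⟨m, hmn, ?_, ?_⟩
  · have h1 : (w.rotate m).sum = w.sum := (w.rotate_perm m).sum_eq
    have h2 : (w.rotate m).length = w.length := w.length_rotate m
    omega
  · intro i hi
    rw [List.length_rotate] at hi
    have hSm := hSle m
    rcases le_or_gt i (n - m) with hc | hc
    · have hlow := rot_take_low w (le_of_lt hmn) hc
      rcases lt_or_ge (m + i) n with hc2 | hc2
      · have := hmax (m + i) hc2
        have := hSle (m + i)
        omega
      · -- m + i = n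
        have hmi : m + i = n := by omega
        have hm0 : 0 < m := by omega
        have hkey := hfirst 0 hm0
        simp only [List.take_zero, List.sum_nil] at hkey
        rw [hmi, hSn] at hlow
        omega
    · have hhigh := rot_take_high w (m := m) (i := i) (le_of_lt hmn) (by omega) (by omega)
      rw [← hn] at hhigh
      have hj : i - (n - m) < m := by omega
      have hkey := hfirst _ hj
      have := hSle (i - (n - m))
      omega

theorem rotate_isCode_unique {w : List ℕ} {d : ℕ} (hw : IsCode w) (hd0 : 0 < d)
    (hdn : d < w.length) (h : IsCode (w.rotate d)) : False := by
  have h1 := hw.2 d hdn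
  have hlow := rot_take_low w (le_of_lt hdn) (le_refl (w.length - d))
  rw [Nat.add_sub_cancel' (le_of_lt hdn), List.take_length] at hlow
  have h2 := h.2 (w.length - d) (by rw [List.length_rotate]; omega)
  have h3 := hw.1
  omega


open Finset in
theorem exists_perm_comp {n : ℕ} {f g : Fin n → ℕ}
    (h : Multiset.map f Finset.univ.val = Multiset.map g Finset.univ.val) :
    ∃ σ : Equiv.Perm (Fin n), f = g ∘ σ := by
  classical
  have hfil : ∀ (f : Fin n → ℕ) (k : ℕ), Fintype.card {i // f i = k}
      = Multiset.card (Multiset.filter (fun a => k = f a) Finset.univ.val) := by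
    intro f k
    rw [Fintype.card_subtype]
    have : (Finset.univ.filter fun i => f i = k).card
        = Multiset.card (Finset.univ.filter fun i => f i = k).val := rfl
    rw [this, Finset.filter_val, Multiset.filter_congr (fun x _ => (eq_comm : f x = k ↔ k = f x))]
  have hcount : ∀ k, Fintype.card {i // f i = k} = Fintype.card {i // g i = k} := by
    intro k
    have hk := congrArg (Multiset.count k) h
    rw [Multiset.count_map, Multiset.count_map] at hk
    rw [hfil, hfil, hk]
  let e : ∀ k, {i // f i = k} ≃ {i // g i = k} := fun k => Fintype.equivOfCardEq (hcount k)
  exact ⟨Equiv.ofFiberEquiv e, funext fun i => (Equiv.ofFiberEquiv_map e i).symm⟩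

theorem univ_val_map_perm {n : ℕ} (σ : Equiv.Perm (Fin n)) :
    (Finset.univ.val : Multiset (Fin n)).map σ = Finset.univ.val := by
  have h : Finset.map σ.toEmbedding Finset.univ = Finset.univ := Finset.map_univ_equiv σ
  calc Finset.univ.val.map ⇑σ = (Finset.map σ.toEmbedding Finset.univ).val := rfl
  _ = Finset.univ.val := by rw [h]

/-- number of lists with a given multiset of entries, times the product of fiber factorials,
is `n!`. -/
theorem list_count {n : ℕ} (c : Fin n → ℕ) :
    ((Multiset.map c Finset.univ.val).toList.permutations.toFinset.card)
        * ∏ k ∈ Finset.univ.image c, (Finset.univ.filter fun i => c i = k).card.factorial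
      = Nat.factorial n := by
  classical
  set M : Multiset ℕ := Multiset.map c Finset.univ.val with hM
  set LF : Finset (List ℕ) := M.toList.permutations.toFinset with hLF
  have mem_LF : ∀ l : List ℕ, l ∈ LF ↔ (↑l : Multiset ℕ) = M := by
    intro l
    rw [hLF, List.mem_toFinset, List.mem_permutations, ← Multiset.coe_eq_coe,
      Multiset.coe_toList]
  set Ψ : Equiv.Perm (Fin n) → List ℕ := fun σ => List.ofFn (c ∘ σ) with hΨ
  have hΨM : ∀ σ, (↑(Ψ σ) : Multiset ℕ) = M := by
    intro σ
    rw [hΨ, hM]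
    calc (↑(List.ofFn (c ∘ σ)) : Multiset ℕ)
        = Finset.univ.val.map (c ∘ σ) := by rw [Fin.univ_val_map]
      _ = (Finset.univ.val.map σ).map c := by rw [Multiset.map_map]
      _ = Finset.univ.val.map c := by rw [univ_val_map_perm]
  have himage : Finset.univ.image Ψ = LF := by
    apply Finset.ext
    intro l
    simp only [Finset.mem_image, Finset.mem_univ, true_and, mem_LF]
    constructor
    · rintro ⟨σ, rfl⟩; exact hΨM σ
    · intro hl
      have hlen : l.length = n := by
        have := congrArg Multiset.card hl
        simp only [Multiset.coe_card, hM, Multiset.card_map] at this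
        simpa using this
      set f : Fin n → ℕ := fun i => l.get (Fin.cast hlen.symm i) with hf
      have hofn : List.ofFn f = l := by
        apply List.ext_getElem (by simp [hlen])
        intro i h1 h2
        simp [hf]
      have hmap : Multiset.map f Finset.univ.val = Multiset.map c Finset.univ.val := by
        rw [← hM, ← hl, ← hofn]
        rw [Fin.univ_val_map]
      obtain ⟨σ, hσ⟩ := exists_perm_comp hmap
      exact ⟨σ, by simp only [hΨ, ← hσ, hofn]⟩
  -- fibers of Ψ all have the cardinality of the stabilizer
  have hfiber : ∀ σ₀ : Equiv.Perm (Fin n),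
      (Finset.univ.filter fun τ => Ψ τ = Ψ σ₀).card
        = (Finset.univ.filter fun ρ : Equiv.Perm (Fin n) => c ∘ ⇑ρ = c).card := by
    intro σ₀
    refine Finset.card_bij (fun τ _ => τ * σ₀⁻¹) ?_ ?_ ?_
    · intro τ hτ
      simp only [Finset.mem_filter, Finset.mem_univ, true_and] at hτ ⊢
      have : c ∘ ⇑τ = c ∘ ⇑σ₀ := List.ofFn_injective hτ
      funext x
      have := congrFun this (σ₀⁻¹ x)
      simpa using this
    · intro τ₁ h₁ τ₂ h₂ he
      exact mul_right_cancel he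
    · intro ρ hρ
      simp only [Finset.mem_filter, Finset.mem_univ, true_and] at hρ
      refine ⟨ρ * σ₀, Finset.mem_filter.mpr ⟨Finset.mem_univ _, ?_⟩, by group⟩
      have hcomp : c ∘ ⇑(ρ * σ₀) = c ∘ ⇑σ₀ := by
        funext x
        have := congrFun hρ (σ₀ x)
        simpa using this
      show List.ofFn (c ∘ ⇑(ρ * σ₀)) = List.ofFn (c ∘ ⇑σ₀)
      rw [hcomp]
  have hcardPerm : (Finset.univ : Finset (Equiv.Perm (Fin n))).card = Nat.factorial n := by
    rw [Finset.card_univ, Fintype.card_perm, Fintype.card_fin]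
  have hsum := Finset.card_eq_sum_card_image Ψ (Finset.univ : Finset (Equiv.Perm (Fin n)))
  rw [himage] at hsum
  have hconst : ∀ l ∈ LF, (Finset.univ.filter fun τ => Ψ τ = l).card
      = (Finset.univ.filter fun ρ : Equiv.Perm (Fin n) => c ∘ ⇑ρ = c).card := by
    intro l hl
    obtain ⟨σ₀, -, rfl⟩ : ∃ σ₀, σ₀ ∈ Finset.univ ∧ Ψ σ₀ = l := by
      have : l ∈ Finset.univ.image Ψ := himage ▸ hl
      simpa [Finset.mem_image] using this
    exact hfiber σ₀
  rw [Finset.sum_congr rfl hconst, Finset.sum_const, smul_eq_mul] at hsum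
  -- stabilizer cardinality
  have hstab : (Finset.univ.filter fun ρ : Equiv.Perm (Fin n) => c ∘ ⇑ρ = c).card
      = ∏ k ∈ Finset.univ.image c, (Finset.univ.filter fun i => c i = k).card.factorial := by
    have h1 : (Finset.univ.filter fun ρ : Equiv.Perm (Fin n) => c ∘ ⇑ρ = c).card
        = Fintype.card {g : Equiv.Perm (Fin n) // c ∘ g = c} := by
      rw [Fintype.card_subtype]
    rw [h1, DomMulAct.stabilizer_card']
    apply Finset.prod_congr rfl
    intro k _
    rw [Fintype.card_subtype]
  rw [hstab] at hsum
  rw [← hcardPerm, hsum]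

/-- if `w` is a code then `w = w.rotate d` with `d ≤ n` forces `d = 0` or `d = n` -/
theorem code_rotate_eq_self {w : List ℕ} (hw : IsCode w) {d : ℕ} (hd : d < w.length)
    (h : w.rotate d = w) : d = 0 := by
  by_contra hne
  exact rotate_isCode_unique hw (Nat.pos_of_ne_zero hne) hd (by rw [h]; exact hw)

theorem rotation_count {n : ℕ} (hn : 0 < n) (M : Multiset ℕ) (hcard : Multiset.card M = n)
    (hsum : M.sum + 1 = n) [DecidablePred IsCode] :
    M.toList.permutations.toFinset.card
      = n * (M.toList.permutations.toFinset.filter (fun l => IsCode l)).card := by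
  set LF : Finset (List ℕ) := M.toList.permutations.toFinset with hLF
  have mem_LF : ∀ l : List ℕ, l ∈ LF ↔ (↑l : Multiset ℕ) = M := by
    intro l
    rw [hLF, List.mem_toFinset, List.mem_permutations, ← Multiset.coe_eq_coe,
      Multiset.coe_toList]
  set CF : Finset (List ℕ) := LF.filter (fun l => IsCode l) with hCF
  have hlenM : ∀ l ∈ LF, l.length = n := by
    intro l hl
    rw [mem_LF] at hl
    rw [← Multiset.coe_card, hl, hcard]
  have hsumM : ∀ l ∈ LF, l.sum + 1 = n := by
    intro l hl
    rw [mem_LF] at hl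
    rw [← Multiset.sum_coe, hl, hsum]
  have key : (Finset.range n ×ˢ CF).card = LF.card := by
    refine Finset.card_bij (fun p _ => p.2.rotate p.1) ?_ ?_ ?_
    · rintro ⟨j, w⟩ hp
      simp only [Finset.mem_product, Finset.mem_range, hCF, Finset.mem_filter] at hp
      obtain ⟨hj, hw, hwc⟩ := hp
      rw [mem_LF] at hw ⊢
      rw [← hw, Multiset.coe_eq_coe]
      exact w.rotate_perm j
    · rintro ⟨j, w⟩ hp ⟨j', w'⟩ hp' he
      simp only [Finset.mem_product, Finset.mem_range, hCF, Finset.mem_filter] at hp hp'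
      obtain ⟨hj, hwLF, hwc⟩ := hp
      obtain ⟨hj', hwLF', hwc'⟩ := hp'
      have hwlen : w.length = n := hlenM w hwLF
      have hwlen' : w'.length = n := hlenM w' hwLF'
      simp only at he
      -- w' = w.rotate ((j + (n - j')) % n)
      have h1 : w' = w.rotate ((j + (n - j')) % n) := by
        have : (w'.rotate j').rotate (n - j') = w' := by
          rw [List.rotate_rotate, ← hwlen', Nat.add_sub_cancel' (by omega), List.rotate_length]
        rw [← this, ← he, List.rotate_rotate, ← hwlen, List.rotate_mod, hwlen]
      have hd : (j + (n - j')) % n < n := Nat.mod_lt _ hn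
      have hd0 : (j + (n - j')) % n = 0 := by
        by_contra hne
        exact rotate_isCode_unique hwc (Nat.pos_of_ne_zero hne) (by omega)
          (by rw [← h1]; exact hwc')
      rw [hd0, List.rotate_zero] at h1
      rw [h1] at he ⊢
      -- now rotations of the same code coincide only for equal shift
      have h2 : w.rotate ((j' + (n - j)) % n) = w := by
        have e1 : (w.rotate j).rotate (n - j) = w := by
          rw [List.rotate_rotate, Nat.add_sub_cancel' (le_of_lt hj), ← hwlen, List.rotate_length]
        calc w.rotate ((j' + (n - j)) % n)
            = w.rotate (j' + (n - j)) := by rw [← hwlen, List.rotate_mod]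
          _ = (w.rotate j').rotate (n - j) := by rw [← List.rotate_rotate]
          _ = (w.rotate j).rotate (n - j) := by rw [he]
          _ = w := e1
      have h3 : (j' + (n - j)) % n = 0 :=
        code_rotate_eq_self hwc (d := (j' + (n - j)) % n)
          (by rw [hwlen]; exact Nat.mod_lt _ hn) h2
      have h4 : n ∣ j' + (n - j) := Nat.dvd_of_mod_eq_zero h3
      obtain ⟨q, hq⟩ := h4
      have hq1 : q = 1 := by
        rcases q with _ | _ | q
        · omega
        · omega
        · have h5 : n * 2 ≤ n * (q + 1 + 1) := Nat.mul_le_mul_left n (by omega)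
          omega
      subst hq1
      have hjj : j = j' := by omega
      simp [hjj]
    · intro l hl
      obtain ⟨m, hm, hmc⟩ := exists_rotate_isCode l (by rw [hlenM l hl]; exact hsumM l hl)
      rw [hlenM l hl] at hm
      have hrotLF : l.rotate m ∈ LF := by
        rw [mem_LF]
        rw [← (mem_LF l).mp hl, Multiset.coe_eq_coe]
        exact l.rotate_perm m
      rcases Nat.eq_zero_or_pos m with rfl | hm0
      · exact ⟨(0, l.rotate 0), Finset.mem_product.mpr
          ⟨Finset.mem_range.mpr hn, Finset.mem_filter.mpr ⟨hrotLF, hmc⟩⟩,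
          by simp⟩
      · refine ⟨(n - m, l.rotate m), Finset.mem_product.mpr
          ⟨Finset.mem_range.mpr (by omega), Finset.mem_filter.mpr ⟨hrotLF, hmc⟩⟩, ?_⟩
        simp only
        rw [List.rotate_rotate, Nat.add_sub_cancel' (by omega), ← hlenM l hl,
          List.rotate_length]
  rw [← key, Finset.card_product, Finset.card_range]

/-- The number of plane trees with child sequence `c` (a sequence of `n`
non-negative integers summing to `n-1`) is `(1/n)·n!/∏_k n_k!`, where
`n_k = #{i : c_i = k}`; stated multiplicatively. -/
theorem stmt3 {n : ℕ} (hn : 0 < n) (c : Fin n → ℕ) (hc : ∑ i, c i = n - 1) :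
    {T : PlaneTree | T.hasChildSeq c}.ncard * n *
        ∏ k ∈ Finset.range n, (Finset.univ.filter fun i => c i = k).card.factorial
      = Nat.factorial n := by
  classical
  set M : Multiset ℕ := Multiset.map c Finset.univ.val with hM
  have hMcard : Multiset.card M = n := by simp [hM]
  have hMsum : M.sum + 1 = n := by
    rw [Finset.sum_eq_multiset_sum] at hc
    rw [hM, hc]
    omega
  set LF : Finset (List ℕ) := M.toList.permutations.toFinset with hLF
  have mem_LF : ∀ l : List ℕ, l ∈ LF ↔ (↑l : Multiset ℕ) = M := by
    intro l
    rw [hLF, List.mem_toFinset, List.mem_permutations, ← Multiset.coe_eq_coe,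
      Multiset.coe_toList]
  set CF : Finset (List ℕ) := LF.filter (fun l => IsCode l) with hCF
  -- the image of the tree set under `code` is `CF`
  have himg : PlaneTree.code '' {T : PlaneTree | T.hasChildSeq c} = ↑CF := by
    ext w
    simp only [Set.mem_image, Set.mem_setOf_eq, Finset.coe_filter, hCF, Set.mem_setOf_eq,
      mem_LF]
    constructor
    · rintro ⟨T, hT, rfl⟩
      refine ⟨?_, PlaneTree.isCode_code T⟩
      rw [PlaneTree.coe_code]
      exact hT
    · rintro ⟨hw, hwc⟩
      obtain ⟨T, rfl⟩ := PlaneTree.decode w hwc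
      refine ⟨T, ?_, rfl⟩
      show T.childCounts = M
      rw [← PlaneTree.coe_code, hw]
  have h1 : {T : PlaneTree | T.hasChildSeq c}.ncard = CF.card := by
    rw [← Set.ncard_coe_finset, ← himg,
      Set.ncard_image_of_injOn (fun a _ b _ h => PlaneTree.code_inj a b h)]
  have h2 : LF.card = n * CF.card := rotation_count hn M hMcard hMsum
  have h3 := list_count c
  rw [← hM, ← hLF] at h3
  have h4 : ∏ k ∈ Finset.univ.image c, (Finset.univ.filter fun i => c i = k).card.factorial
      = ∏ k ∈ Finset.range n, (Finset.univ.filter fun i => c i = k).card.factorial := by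
    apply Finset.prod_subset
    · intro k hk
      obtain ⟨i, -, rfl⟩ := Finset.mem_image.mp hk
      have hle : c i ≤ ∑ j, c j :=
        Finset.single_le_sum (fun j _ => Nat.zero_le (c j)) (Finset.mem_univ i)
      rw [Finset.mem_range]
      omega
    · intro k _ hk
      have : (Finset.univ.filter fun i => c i = k) = ∅ := by
        rw [Finset.filter_eq_empty_iff]
        intro i _ hci
        exact hk (Finset.mem_image.mpr ⟨i, Finset.mem_univ i, hci⟩)
      rw [this, Finset.card_empty, Nat.factorial_zero]
  rw [h1, Nat.mul_comm (CF.card) n, ← h2, ← h4, h3]
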